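/- Let N_k(p) denote the number of k-Diophantine k-tuples in 𝔽_p (unordered sets of k distinct nonzero elements whose product plus 1 is a square in 𝔽_p, where 0 counts as a square). Then for fixed k, N_k(p) = p^k/(2·k!) + o(p^k) as p → ∞ over primes; concretely, |2·k!·N_k(p) − p^k| ≤ C_k · p^{k−1/2} for some constant C_k depending only on k. -/

import Mathlib

open Finset

section Aux
variable {p : ℕ} [Fact p.Prime]

lemma aux_two_ne (hp2 : p ≠ 2) : (2 : ZMod p) ≠ 0 := by
  have : ((2 : ℕ) : ZMod p) ≠ 0 := by
    rw [Ne, ZMod.natCast_eq_zero_iff]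
    intro h
    exact hp2 ((Nat.prime_dvd_prime_iff_eq (Fact.out) Nat.prime_two).mp h)
  simpa using this
lemma aux_sq_card (hp2 : p ≠ 2) :
    2 * (univ.filter (fun a : ZMod p => IsSquare a)).card = p + 1 := by
  classical
  have hmaps : ∀ x : ZMod p, x ∈ (univ : Finset (ZMod p)) →
      x ^ 2 ∈ univ.filter (fun a : ZMod p => IsSquare a) := by
    intro x _
    simpa using IsSquare.sq x
  have hcard := Finset.card_eq_sum_card_fiberwise hmaps
  rw [Finset.card_univ, ZMod.card] at hcard
  have h0mem : (0 : ZMod p) ∈ univ.filter (fun a : ZMod p => IsSquare a) := by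
    simpa using isSquare_zero
  rw [← Finset.add_sum_erase _ _ h0mem] at hcard
  have hfib0 : (univ.filter (fun x : ZMod p => x ^ 2 = 0)).card = 1 := by
    have : (univ.filter (fun x : ZMod p => x ^ 2 = 0)) = {0} := by
      ext x; simp [pow_eq_zero_iff]
    rw [this, card_singleton]
  have hfib : ∀ a ∈ (univ.filter (fun a : ZMod p => IsSquare a)).erase 0,
      (univ.filter (fun x : ZMod p => x ^ 2 = a)).card = 2 := by
    intro a ha
    rw [mem_erase, mem_filter] at ha
    obtain ⟨ha0, -, b, hb⟩ := ha
    have hb0 : b ≠ 0 := by rintro rfl; simp at hb; exact ha0 hb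
    have : (univ.filter (fun x : ZMod p => x ^ 2 = a)) = {b, -b} := by
      ext x
      simp only [mem_filter, mem_univ, true_and, mem_insert, mem_singleton]
      rw [hb, ← sq]
      exact Commute.sq_eq_sq_iff_eq_or_eq_neg (Commute.all _ _)
    rw [this, card_insert_of_notMem, card_singleton]
    simp only [mem_singleton]
    intro h
    have h2 : (2 : ZMod p) * b = 0 := by
      rw [two_mul, add_eq_zero_iff_eq_neg]; exact h
    rcases mul_eq_zero.mp h2 with h' | h'
    · exact aux_two_ne hp2 h'
    · exact hb0 h'
  rw [Finset.sum_congr rfl hfib, Finset.sum_const, hfib0, smul_eq_mul] at hcard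
  rw [Finset.card_erase_of_mem h0mem] at hcard
  have hpos : 0 < (univ.filter (fun a : ZMod p => IsSquare a)).card :=
    Finset.card_pos.mpr ⟨0, h0mem⟩
  omega
lemma aux_card_ne_zero : Fintype.card {x : ZMod p // x ≠ 0} = p - 1 := by
  have := Fintype.card_subtype_compl (fun x : ZMod p => x = 0)
  simp only [Fintype.card_subtype_eq, ZMod.card] at this
  exact this

lemma aux_fib_ne (m : ℕ) (c : ZMod p) (hc : c ≠ 0) :
    (univ.filter fun f : Fin (m+1) → ZMod p => ∏ i, f i = c).card = (p-1)^m := by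
  classical
  rw [show (p-1)^m = (univ : Finset (Fin m → {x : ZMod p // x ≠ 0})).card by
    rw [card_univ, Fintype.card_fun, aux_card_ne_zero, Fintype.card_fin]]
  refine Finset.card_bij'
    (fun f hf => fun j => (⟨f j.succ, by
      rw [mem_filter] at hf
      intro h0
      exact hc (hf.2 ▸ Finset.prod_eq_zero (Finset.mem_univ j.succ) h0)⟩ :
      {x : ZMod p // x ≠ 0}))
    (fun g _ => Fin.cons (c * (∏ j, (g j : ZMod p))⁻¹) (fun j => (g j : ZMod p)))
    (fun f hf => Finset.mem_univ _) (fun g hg => ?memS) ?leftinv ?rightinv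
  case memS =>
    rw [mem_filter]
    refine ⟨Finset.mem_univ _, ?_⟩
    rw [Fin.prod_cons]
    have hgg : (∏ j, (g j : ZMod p)) ≠ 0 := by
      rw [Finset.prod_ne_zero_iff]
      exact fun j _ => (g j).2
    field_simp
  case leftinv =>
    intro f hf
    rw [mem_filter] at hf
    have h1 : (∏ j : Fin m, f j.succ) ≠ 0 := by
      intro h0
      obtain ⟨j, -, hj⟩ := Finset.prod_eq_zero_iff.mp h0
      exact hc (hf.2 ▸ Finset.prod_eq_zero (Finset.mem_univ j.succ) hj)
    have h2 : f 0 * ∏ j : Fin m, f j.succ = c := by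
      rw [← Fin.prod_univ_succ]; exact hf.2
    have h3 : c * (∏ j : Fin m, f j.succ)⁻¹ = f 0 := by
      field_simp [← h2, mul_comm]
      rw [← h2]; ring
    show Fin.cons (c * (∏ j : Fin m, f j.succ)⁻¹) (fun j => f j.succ) = f
    conv_rhs => rw [← Fin.cons_self_tail f]
    rw [h3]
    rfl
  case rightinv =>
    intro g hg
    funext j
    apply Subtype.ext
    simp [Fin.cons_succ]
lemma aux_nonzero_card (k : ℕ) :
    (univ.filter fun f : Fin k → ZMod p => ∀ i, f i ≠ 0).card = (p-1)^k := by
  classical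
  have : (univ.filter fun f : Fin k → ZMod p => ∀ i, f i ≠ 0)
      = Fintype.piFinset (fun _ : Fin k => univ.filter (· ≠ 0)) := by
    ext f
    simp [Fintype.mem_piFinset]
  rw [this, Fintype.card_piFinset]
  have h1 : (univ.filter (· ≠ (0 : ZMod p))).card = p - 1 := by
    rw [Finset.filter_ne', Finset.card_erase_of_mem (mem_univ _), card_univ, ZMod.card]
  simp [h1]

lemma aux_fib_zero (k : ℕ) :
    (univ.filter fun f : Fin k → ZMod p => ∏ i, f i = 0).card + (p-1)^k = p^k := by
  classical
  have : (univ.filter fun f : Fin k → ZMod p => ∏ i, f i = 0)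
      = univ \ (univ.filter fun f : Fin k → ZMod p => ∀ i, f i ≠ 0) := by
    ext f
    simp only [mem_filter, mem_univ, true_and, mem_sdiff, Finset.prod_eq_zero_iff]
    push_neg
    tauto
  rw [this, Finset.card_sdiff_of_subset (Finset.filter_subset _ _), aux_nonzero_card, card_univ,
    Fintype.card_fun, Fintype.card_fin, ZMod.card]
  have : (p-1)^k ≤ p^k := Nat.pow_le_pow_left (Nat.sub_le _ _) _
  omega
lemma aux_res (k : ℕ) (i : Fin k) (P : (Fin k → ZMod p) → Prop) [DecidablePred P]
    (h : ∀ f g, P f → P g → (∀ j : Fin k, j ≠ i → f j = g j) → f = g) :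
    (univ.filter P).card ≤ p ^ (k - 1) := by
  classical
  have hcard : Fintype.card ({j : Fin k // j ≠ i} → ZMod p) = p ^ (k-1) := by
    rw [Fintype.card_fun, ZMod.card]
    congr 1
    have := Fintype.card_subtype_compl (fun j : Fin k => j = i)
    simp only [Fintype.card_subtype_eq, Fintype.card_fin] at this
    exact this
  calc (univ.filter P).card
      ≤ (univ : Finset ({j : Fin k // j ≠ i} → ZMod p)).card := by
        apply Finset.card_le_card_of_injOn (fun f => fun j => f j.1)
        · intro f _
          exact mem_univ _
        · intro f hf g hg hfg
          rw [mem_coe, mem_filter] at hf hg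
          apply h f g hf.2 hg.2
          intro j hj
          exact congrFun hfg ⟨j, hj⟩
      _ = p ^ (k - 1) := by rw [card_univ, hcard]

lemma aux_bad (k : ℕ) :
    (univ.filter fun f : Fin k → ZMod p =>
      ¬(Function.Injective f ∧ ∀ i, f i ≠ 0)).card ≤ (k + k*k) * p^(k-1) := by
  classical
  have hsub : (univ.filter fun f : Fin k → ZMod p => ¬(Function.Injective f ∧ ∀ i, f i ≠ 0))
      ⊆ (univ.biUnion fun i : Fin k => univ.filter fun f : Fin k → ZMod p => f i = 0)
        ∪ ((univ : Finset (Fin k × Fin k)).filter fun q => q.1 ≠ q.2).biUnion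
          (fun q => univ.filter fun f : Fin k → ZMod p => f q.1 = f q.2) := by
    intro f hf
    rw [mem_filter] at hf
    rw [Finset.mem_union]
    by_cases h0 : ∀ i, f i ≠ 0
    · right
      have hni : ¬ Function.Injective f := fun hi => hf.2 ⟨hi, h0⟩
      obtain ⟨a, b, hab, hne⟩ := Function.not_injective_iff.mp hni
      rw [Finset.mem_biUnion]
      exact ⟨(a, b), by simp [hne], by simp [hab]⟩
    · left
      push_neg at h0
      obtain ⟨i, hi⟩ := h0
      rw [Finset.mem_biUnion]
      exact ⟨i, mem_univ _, by simp [hi]⟩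
  calc _ ≤ _ := Finset.card_le_card hsub
    _ ≤ _ := Finset.card_union_le _ _
    _ ≤ k * p^(k-1) + (k*k) * p^(k-1) := by
      apply Nat.add_le_add
      · calc _ ≤ _ := Finset.card_biUnion_le
          _ ≤ _ := ?_
        have hbound : ∀ i : Fin k,
            (univ.filter fun f : Fin k → ZMod p => f i = 0).card ≤ p^(k-1) := by
          intro i
          apply aux_res k i
          intro f g hf hg hagree
          funext j
          by_cases hj : j = i
          · rw [hj, hf, hg]
          · exact hagree j hj
        calc ∑ i : Fin k, (univ.filter fun f : Fin k → ZMod p => f i = 0).card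
            ≤ ∑ _i : Fin k, p^(k-1) := Finset.sum_le_sum (fun i _ => hbound i)
          _ = k * p^(k-1) := by simp [mul_comm]
      · calc _ ≤ _ := Finset.card_biUnion_le
          _ ≤ _ := ?_
        have hbound : ∀ q : Fin k × Fin k, q.1 ≠ q.2 →
            (univ.filter fun f : Fin k → ZMod p => f q.1 = f q.2).card ≤ p^(k-1) := by
          intro q hq
          apply aux_res k q.1
          intro f g hf hg hagree
          funext j
          by_cases hj : j = q.1
          · rw [hj, hf, hg]
            exact hagree q.2 (Ne.symm hq)
          · exact hagree j hj
        calc ∑ q ∈ (univ : Finset (Fin k × Fin k)).filter (fun q => q.1 ≠ q.2),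
              (univ.filter fun f : Fin k → ZMod p => f q.1 = f q.2).card
            ≤ ∑ q ∈ (univ : Finset (Fin k × Fin k)).filter (fun q => q.1 ≠ q.2), p^(k-1) := by
              apply Finset.sum_le_sum
              intro q hq
              exact hbound q (mem_filter.mp hq).2
          _ ≤ (k*k) * p^(k-1) := by
              rw [Finset.sum_const, smul_eq_mul]
              apply Nat.mul_le_mul_right
              calc _ ≤ (univ : Finset (Fin k × Fin k)).card := Finset.card_le_card
                    (Finset.filter_subset _ _)
                _ = k * k := by simp
    _ = (k + k*k) * p^(k-1) := by ring
lemma aux_fact (k : ℕ) [DecidablePred (fun a : ZMod p => IsSquare a)] :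
    (univ.filter fun S : Finset (ZMod p) => S.card = k ∧ (0:ZMod p) ∉ S ∧
        IsSquare (S.prod id + 1)).card * k.factorial
      = (univ.filter fun f : Fin k → ZMod p => Function.Injective f ∧ (∀ i, f i ≠ 0) ∧
        IsSquare ((∏ i, f i) + 1)).card := by
  classical
  set F := univ.filter fun S : Finset (ZMod p) => S.card = k ∧ (0:ZMod p) ∉ S ∧
      IsSquare (S.prod id + 1) with hF
  set A := univ.filter fun f : Fin k → ZMod p => Function.Injective f ∧ (∀ i, f i ≠ 0) ∧
      IsSquare ((∏ i, f i) + 1) with hA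
  have hmaps : ∀ f ∈ A, Finset.image f univ ∈ F := by
    intro f hf
    rw [hA, mem_filter] at hf
    obtain ⟨-, hinj, h0, hsq⟩ := hf
    rw [hF, mem_filter]
    refine ⟨mem_univ _, ?_, ?_, ?_⟩
    · rw [Finset.card_image_of_injective _ hinj, card_univ, Fintype.card_fin]
    · intro hmem
      obtain ⟨i, -, hi⟩ := Finset.mem_image.mp hmem
      exact h0 i hi
    · rwa [Finset.prod_image (fun x _ y _ h => hinj h)]
  have hcard := Finset.card_eq_sum_card_fiberwise hmaps
  have hfib : ∀ S ∈ F, (A.filter fun f => Finset.image f univ = S).card = k.factorial := by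
    intro S hS
    rw [hF, mem_filter] at hS
    obtain ⟨-, hSk, hS0, hSsq⟩ := hS
    have hcS : Fintype.card S = k := by rw [Fintype.card_coe, hSk]
    have hkey : ∀ (f : Fin k → ZMod p), f ∈ A.filter (fun f => Finset.image f univ = S) ↔
        (Function.Injective f ∧ Finset.image f univ = S) := by
      intro f
      simp only [hA, mem_filter, mem_univ, true_and]
      constructor
      · tauto
      · rintro ⟨hinj, him⟩
        refine ⟨⟨hinj, ?_, ?_⟩, him⟩
        · intro i hi
          have := Finset.mem_image_of_mem f (mem_univ i)
          rw [hi, him] at this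
          exact hS0 this
        · have : ∏ i, f i = S.prod id := by
            rw [← him, Finset.prod_image (fun x _ y _ h => hinj h)]
            rfl
          rwa [this]
    rw [show k.factorial = (univ : Finset (Fin k ≃ S)).card by
      rw [card_univ, Fintype.card_equiv (Fintype.equivFinOfCardEq hcS).symm, Fintype.card_fin]]
    refine Finset.card_bij'
      (fun f hf => Equiv.ofBijective
        (fun j => (⟨f j, by
          rw [← ((hkey f).mp hf).2]
          exact Finset.mem_image_of_mem f (mem_univ j)⟩ : S))
        ((Fintype.bijective_iff_injective_and_card _).mpr
          ⟨fun a b h => ((hkey f).mp hf).1 (congrArg Subtype.val h),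
           by rw [Fintype.card_fin, hcS]⟩))
      (fun e _ => fun j => (e j : ZMod p)) (fun f hf => mem_univ _) (fun e he => ?memA)
      ?li ?ri
    case memA =>
      rw [hkey]
      constructor
      · exact fun a b h => e.injective (Subtype.ext h)
      · ext x
        simp only [Finset.mem_image, mem_univ, true_and]
        constructor
        · rintro ⟨j, rfl⟩
          exact (e j).2
        · intro hx
          exact ⟨e.symm ⟨x, hx⟩, by simp⟩
    case li =>
      intro f hf
      rfl
    case ri =>
      intro e he
      ext j
      rfl
  rw [Finset.sum_congr rfl hfib, Finset.sum_const, smul_eq_mul] at hcard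
  exact hcard.symm
lemma aux_T_card (hp2 : p ≠ 2) :
    2 * (univ.filter fun c : ZMod p => IsSquare (c + 1)).card = p + 1 := by
  classical
  have : (univ.filter fun c : ZMod p => IsSquare (c + 1)).card
      = (univ.filter (fun a : ZMod p => IsSquare a)).card := by
    apply Finset.card_bij (fun c _ => c + 1)
    · intro c hc
      rw [mem_filter] at hc ⊢
      exact ⟨mem_univ _, hc.2⟩
    · intro c₁ h₁ c₂ h₂ h
      exact add_right_cancel h
    · intro a ha
      rw [mem_filter] at ha
      exact ⟨a - 1, by rw [mem_filter]; simpa using ha.2, by ring⟩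
  rw [this]
  exact aux_sq_card hp2



lemma aux_B (hp2 : p ≠ 2) (m : ℕ) :
    2 * (univ.filter fun f : Fin (m+1) → ZMod p => IsSquare (∏ i, f i + 1)).card
      + (p-1)^(m+1) = 2 * p^(m+1) := by
  classical
  have aux_fib_ne := fun (c : ZMod p) (hc : c ≠ 0) => aux_fib_ne (p := p) m c hc
  have aux_fib_zero := aux_fib_zero (p := p) (m+1)
  set B := univ.filter fun f : Fin (m+1) → ZMod p => IsSquare (∏ i, f i + 1) with hB
  set T := univ.filter fun c : ZMod p => IsSquare (c + 1) with hT
  have hmaps : ∀ f ∈ B, (∏ i, f i) ∈ T := by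
    intro f hf
    rw [hB, mem_filter] at hf
    rw [hT, mem_filter]
    exact ⟨mem_univ _, hf.2⟩
  have hcard := Finset.card_eq_sum_card_fiberwise hmaps
  have hfibeq : ∀ c ∈ T, (B.filter fun f => ∏ i, f i = c).card
      = (univ.filter fun f : Fin (m+1) → ZMod p => ∏ i, f i = c).card := by
    intro c hc
    congr 1
    ext f
    rw [hT, mem_filter] at hc
    simp only [hB, mem_filter, mem_univ, true_and]
    constructor
    · tauto
    · intro h
      exact ⟨h ▸ hc.2, h⟩
  rw [Finset.sum_congr rfl hfibeq] at hcard
  have h0T : (0 : ZMod p) ∈ T := by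
    rw [hT, mem_filter]
    simpa using isSquare_one
  rw [← Finset.add_sum_erase _ _ h0T] at hcard
  have herase : ∀ c ∈ T.erase 0,
      (univ.filter fun f : Fin (m+1) → ZMod p => ∏ i, f i = c).card = (p-1)^m := by
    intro c hc
    exact aux_fib_ne c (Finset.mem_erase.mp hc).1
  rw [Finset.sum_congr rfl herase, Finset.sum_const, smul_eq_mul,
    Finset.card_erase_of_mem h0T] at hcard
  -- arithmetic
  have hT1 : 1 ≤ T.card := Finset.card_pos.mpr ⟨0, h0T⟩
  clear hmaps hfibeq herase
  have hTc : 2 * T.card = p + 1 := aux_T_card hp2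
  clear_value B T
  clear hB hT
  obtain ⟨b, hb⟩ := Nat.exists_eq_add_of_le hT1
  rw [hb] at hcard hTc
  have hp1 : p - 1 = 2 * b := by clear * - hTc hb; omega
  simp only [Nat.add_sub_cancel_left, add_tsub_cancel_left] at hcard
  rw [pow_succ, hp1] at aux_fib_zero ⊢
  rw [hp1] at hcard
  rw [hcard, ← aux_fib_zero]
  ring

end Aux
lemma aux_pow (q : ℕ) : ∀ n : ℕ, (q+1)^n ≤ q^n + n * (q+1)^(n-1)
  | 0 => by simp
  | 1 => by simp
  | (n+2) => by
    have ih := aux_pow q (n+1)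
    simp only [Nat.add_sub_cancel] at ih ⊢
    calc (q+1)^(n+2) = (q+1) * (q+1)^(n+1) := by ring
    _ ≤ (q+1) * (q^(n+1) + (n+1)*(q+1)^n) := Nat.mul_le_mul_left _ ih
    _ = q^(n+2) + (q^(n+1) + (n+1)*((q+1)*(q+1)^n)) := by ring
    _ ≤ q^(n+2) + ((q+1)^(n+1) + (n+1)*(q+1)^(n+1)) := by
        have h1 : q^(n+1) ≤ (q+1)^(n+1) := Nat.pow_le_pow_left (by omega) _
        have h2 : (q+1)*(q+1)^n = (q+1)^(n+1) := by ring
        rw [h2]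
        omega
    _ = q^(n+2) + (n+2) * (q+1)^(n+1) := by ring

theorem asymptotic_k_diophantine_k_tuples (k : ℕ) (hk : 2 ≤ k) :
    ∃ C : ℝ, ∀ p : ℕ, p.Prime → Odd p →
      |(2 * (k.factorial : ℝ) *
          (Nat.card {S : Finset (ZMod p) // S.card = k ∧ (0 : ZMod p) ∉ S ∧
            IsSquare (S.prod id + 1)} : ℝ)) - (p : ℝ) ^ k| ≤
        C * (p : ℝ) ^ (k - 1) * Real.sqrt p := by
  classical
  refine ⟨((3*k + 2*k*k : ℕ) : ℝ), ?_⟩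
  intro p hp hodd
  haveI : Fact p.Prime := ⟨hp⟩
  have hp2 : p ≠ 2 := by
    rintro rfl
    exact (by decide : ¬ Odd 2) hodd
  have hp3 : 3 ≤ p := by
    have := hp.two_le
    omega
  obtain ⟨m, hm⟩ : ∃ m, k = m + 1 := ⟨k-1, by omega⟩
  set F := univ.filter (fun S : Finset (ZMod p) => S.card = k ∧ (0:ZMod p) ∉ S ∧
      IsSquare (S.prod id + 1)) with hF
  set A := univ.filter (fun f : Fin k → ZMod p => Function.Injective f ∧ (∀ i, f i ≠ 0) ∧
      IsSquare ((∏ i, f i) + 1)) with hA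
  set B := univ.filter (fun f : Fin k → ZMod p => IsSquare ((∏ i, f i) + 1)) with hB
  have hN : Nat.card {S : Finset (ZMod p) // S.card = k ∧ (0 : ZMod p) ∉ S ∧
      IsSquare (S.prod id + 1)} = F.card := by
    rw [Nat.card_eq_fintype_card, hF, Fintype.card_subtype]
  have hFA : F.card * k.factorial = A.card := aux_fact k
  have hAB : A.card ≤ B.card := by
    apply Finset.card_le_card
    rw [hA, hB]
    exact Finset.monotone_filter_right _ (fun f _ h => h.2.2)
  have hBA : B.card ≤ A.card + (k + k*k) * p^(k-1) := by
    have hsub : B ⊆ A ∪ (univ.filter fun f : Fin k → ZMod p =>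
        ¬(Function.Injective f ∧ ∀ i, f i ≠ 0)) := by
      intro f hf
      rw [hB, mem_filter] at hf
      rw [Finset.mem_union, hA, mem_filter, mem_filter]
      by_cases h : Function.Injective f ∧ ∀ i, f i ≠ 0
      · exact Or.inl ⟨mem_univ _, h.1, h.2, hf.2⟩
      · exact Or.inr ⟨mem_univ _, h⟩
    calc B.card ≤ _ := Finset.card_le_card hsub
      _ ≤ _ := Finset.card_union_le _ _
      _ ≤ A.card + (k + k*k) * p^(k-1) := Nat.add_le_add_left (aux_bad k) _
  have hB2 : 2 * B.card + (p-1)^k = 2 * p^k := by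
    subst hm
    exact aux_B hp2 m
  have hpow : p^k ≤ (p-1)^k + k * p^(k-1) := by
    obtain ⟨q, rfl⟩ : ∃ q, p = q + 1 := ⟨p - 1, by omega⟩
    simpa using aux_pow q k
  -- key nat inequalities
  have key : ∀ a b P Y Z W I : ℕ, a ≤ b → b ≤ a + W → 2*b + Y = 2*P → P ≤ Y + Z → Y ≤ P →
      I = Z + 2*W → 2*a ≤ P + I ∧ P ≤ 2*a + I := by
    intros a b P Y Z W I h1 h2 h3 h4 h5 h6
    omega
  obtain ⟨h1, h2⟩ := key A.card B.card (p^k) ((p-1)^k) (k * p^(k-1)) ((k+k*k) * p^(k-1))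
    ((3*k+2*k*k) * p^(k-1)) hAB hBA hB2 hpow (Nat.pow_le_pow_left (by omega) k) (by ring)
  -- pass to the reals
  have hcast : 2 * (k.factorial : ℝ) *
      (Nat.card {S : Finset (ZMod p) // S.card = k ∧ (0 : ZMod p) ∉ S ∧
        IsSquare (S.prod id + 1)} : ℝ) = (2 * A.card : ℕ) := by
    rw [hN, ← hFA]
    push_cast
    ring
  have hkey : |2 * (k.factorial : ℝ) *
      (Nat.card {S : Finset (ZMod p) // S.card = k ∧ (0 : ZMod p) ∉ S ∧
        IsSquare (S.prod id + 1)} : ℝ) - (p : ℝ) ^ k| ≤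
      ((3*k + 2*k*k : ℕ) : ℝ) * (p : ℝ) ^ (k - 1) := by
    rw [hcast, abs_le]
    push_cast
    have c1 : ((2 * A.card : ℕ) : ℝ) ≤ ((p^k + (3*k+2*k*k) * p^(k-1) : ℕ) : ℝ) :=
      Nat.cast_le.mpr h1
    have c2 : ((p^k : ℕ) : ℝ) ≤ ((2 * A.card + (3*k+2*k*k) * p^(k-1) : ℕ) : ℝ) :=
      Nat.cast_le.mpr h2
    push_cast at c1 c2
    constructor <;> linarith
  have hsq1 : (1:ℝ) ≤ Real.sqrt p := by
    rw [show (1:ℝ) = Real.sqrt 1 by simp]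
    exact Real.sqrt_le_sqrt (by exact_mod_cast by omega)
  calc _ ≤ ((3*k + 2*k*k : ℕ) : ℝ) * (p : ℝ) ^ (k - 1) := hkey
    _ = ((3*k + 2*k*k : ℕ) : ℝ) * (p : ℝ) ^ (k - 1) * 1 := by ring
    _ ≤ ((3*k + 2*k*k : ℕ) : ℝ) * (p : ℝ) ^ (k - 1) * Real.sqrt p := by
        apply mul_le_mul_of_nonneg_left hsq1
        positivity
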